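/- Let 𝔽 be a clone on a set A and let 𝕊 ⊆ 𝔽^(1) be a transformation semigroup contained in the unary part of 𝔽. If cf(𝕊) > ℵ₀ and 𝔽 has finite relative rank modulo 𝕊, then cf(𝔽) > ℵ₀. -/

import Mathlib

universe u v w

namespace CloneTheory

/-- Finitary operations on `A`: the element `⟨n, f⟩` is an operation of arity `n + 1`
(so all arities are `≥ 1`). -/
def Ops (A : Type w) : Type w := Σ n : ℕ, (Fin (n + 1) → A) → A

/-- `S` is a clone on `A`: it contains all projections and is closed under composition. -/
structure IsClone (A : Type w) (S : Set (Ops A)) : Prop where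
  proj : ∀ (n : ℕ) (i : Fin (n + 1)), (⟨n, fun x => x i⟩ : Ops A) ∈ S
  comp : ∀ (n m : ℕ) (f : (Fin (n + 1) → A) → A) (g : Fin (n + 1) → (Fin (m + 1) → A) → A),
    (⟨n, f⟩ : Ops A) ∈ S → (∀ i, (⟨m, g i⟩ : Ops A) ∈ S) →
    (⟨m, fun x => f fun i => g i x⟩ : Ops A) ∈ S

/-- The clone generated by a set of operations. -/
def cloneGen (A : Type w) (M : Set (Ops A)) : Set (Ops A) :=
  ⋂₀ {S : Set (Ops A) | IsClone A S ∧ M ⊆ S}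

/-- The complex product of two sets of operations. -/
def cProd (A : Type w) (U V : Set (Ops A)) : Set (Ops A) :=
  {op | ∃ (n m : ℕ) (f : (Fin (n + 1) → A) → A) (g : Fin (n + 1) → (Fin (m + 1) → A) → A),
    (⟨n, f⟩ : Ops A) ∈ U ∧ (∀ i, (⟨m, g i⟩ : Ops A) ∈ V) ∧
    op = ⟨m, fun x => f fun i => g i x⟩}

/-- The set `J_A^{(k)}` of projections of arity `k + 1`. -/
def projSet (A : Type w) (k : ℕ) : Set (Ops A) :=
  {op | ∃ i : Fin (k + 1), op = ⟨k, fun x => x i⟩}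

/-- The sets `U^{[k,i]}`: operations of arity `k + 1` obtained from `U` by terms of depth
at most `i`. -/
def iter (A : Type w) (U : Set (Ops A)) (k : ℕ) : ℕ → Set (Ops A)
  | 0 => projSet A k
  | i + 1 => cProd A U (iter A U k i) ∪ iter A U k i

/-- The part of `F` of arity `k + 1`. -/
def arityPart (A : Type w) (F : Set (Ops A)) (k : ℕ) : Set (Ops A) :=
  {op | op ∈ F ∧ op.1 = k}

/-- A clone `F` has the Bergman property if for every generating set `H` and every arity there
is a uniform depth bound generating the whole part of that arity. -/
def BergmanProperty (A : Type w) (F : Set (Ops A)) : Prop :=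
  ∀ H : Set (Ops A), H ⊆ F → cloneGen A H = F →
    ∀ k : ℕ, ∃ n : ℕ, iter A H k n = arityPart A F k

/-- A clone `F` has uncountable cofinality: there is no countable increasing chain of proper
subclones of `F` whose union is `F`. -/
def UncountableCofinality (A : Type w) (F : Set (Ops A)) : Prop :=
  ¬ ∃ c : ℕ → Set (Ops A),
      (∀ n, IsClone A (c n)) ∧ (∀ n, c n ⊆ F) ∧ (∀ n, c n ⊆ c (n + 1)) ∧
      (∀ n, c n ≠ F) ∧ (⋃ n, c n) = F

/-- A clone `F` has uncountable strong cofinality: there is no countable strong cofinal chain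
for `F`. -/
def UncountableStrongCofinality (A : Type w) (F : Set (Ops A)) : Prop :=
  ¬ ∃ c : ℕ → Set (Ops A),
      (∀ n, c n ⊆ c (n + 1)) ∧ (∀ n, c n ⊆ F) ∧ (∀ n, c n ≠ F) ∧ (⋃ n, c n) = F ∧
      (∃ k₀ : ℕ, ∀ n, ∀ k, k₀ ≤ k → arityPart A (c n) k ≠ arityPart A F k) ∧
      (∀ n, ∃ m, ∀ k, iter A (c n) k 2 ⊆ c m)

/-- A clone is finitely generated if it is generated by a finite set. -/
def FinitelyGeneratedClone (A : Type w) (F : Set (Ops A)) : Prop :=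
  ∃ H : Set (Ops A), H.Finite ∧ H ⊆ F ∧ cloneGen A H = F

end CloneTheory

namespace CloneTheory

/-- View a transformation of `A` as a unary operation on `A`. -/
def unaryOp (A : Type w) (f : A → A) : Ops A := ⟨0, fun x => f (x 0)⟩

/-- A transformation semigroup `S` has uncountable cofinality: there is no countable increasing
chain of proper subsemigroups of `S` whose union is `S`. -/
def SemigroupUncountableCofinality (A : Type w) (S : Set (A → A)) : Prop :=
  ¬ ∃ c : ℕ → Set (A → A),
      (∀ n, c n ⊆ S) ∧ (∀ n, ∀ f ∈ c n, ∀ g ∈ c n, f ∘ g ∈ c n) ∧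
      (∀ n, c n ⊆ c (n + 1)) ∧ (∀ n, c n ≠ S) ∧ (⋃ n, c n) = S

end CloneTheory

open CloneTheory in
/-- Proposition: if `𝕊 ⊆ 𝔽^(1)` is a transformation semigroup with uncountable cofinality and
`𝔽` has finite relative rank modulo `𝕊`, then `𝔽` has uncountable cofinality. -/
theorem statement14
    (A : Type w) (F : Set (Ops A)) (hF : IsClone A F)
    (S : Set (A → A))
    (hSsemi : ∀ f ∈ S, ∀ g ∈ S, f ∘ g ∈ S)
    (hSsub : ∀ f ∈ S, unaryOp A f ∈ F)
    (hScf : SemigroupUncountableCofinality A S)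
    (hrank : ∃ N : Set (Ops A), N.Finite ∧ N ⊆ F ∧
      cloneGen A ((unaryOp A '' S) ∪ N) = F) :
    UncountableCofinality A F := by
  rintro ⟨c, hclone, hcF, hmono, hprop, hunion⟩
  obtain ⟨N, hNfin, hNF, hgen⟩ := hrank
  have mon : Monotone c := monotone_nat_of_le_succ hmono
  -- N is finite and contained in the union, so it's in some c n₀
  have hNex : ∃ n₀, N ⊆ c n₀ := by
    refine Set.Finite.induction_on
      (motive := fun s _ => s ⊆ (⋃ n, c n) → ∃ n₀, s ⊆ c n₀) N hNfin
      (fun _ => ⟨0, Set.empty_subset _⟩) ?_ (hunion ▸ hNF)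
    intro a s _ _ ih hsub
    obtain ⟨n₁, hn₁⟩ := ih (fun x hx => hsub (Set.mem_insert_of_mem _ hx))
    obtain ⟨n₂, hn₂⟩ := Set.mem_iUnion.mp (hsub (Set.mem_insert _ _))
    refine ⟨max n₁ n₂, ?_⟩
    rintro x (rfl | hx)
    · exact mon (le_max_right _ _) hn₂
    · exact mon (le_max_left _ _) (hn₁ hx)
  obtain ⟨n₀, hn₀⟩ := hNex
  set d : ℕ → Set (A → A) := fun n => {f | f ∈ S ∧ unaryOp A f ∈ c (n₀ + n)} with hd
  have hdS : ∃ n, d n = S := by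
    by_contra h
    push_neg at h
    apply hScf
    refine ⟨d, fun n f hf => hf.1, ?_, ?_, h, ?_⟩
    · intro n f hf g hg
      refine ⟨hSsemi f hf.1 g hg.1, ?_⟩
      have := (hclone (n₀ + n)).comp 0 0 (fun x => f (x 0))
        (fun _ x => g (x 0)) hf.2 (fun _ => hg.2)
      exact this
    · intro n f hf
      exact ⟨hf.1, mon (by omega) hf.2⟩
    · ext f
      simp only [Set.mem_iUnion]
      constructor
      · rintro ⟨n, hn⟩; exact hn.1
      · intro hf
        have : unaryOp A f ∈ ⋃ n, c n := hunion ▸ hSsub f hf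
        obtain ⟨n, hn⟩ := Set.mem_iUnion.mp this
        exact ⟨n, hf, mon (by omega) hn⟩
  obtain ⟨n, hn⟩ := hdS
  apply hprop (n₀ + n)
  have hsubset : (unaryOp A '' S) ∪ N ⊆ c (n₀ + n) := by
    rintro x (⟨f, hf, rfl⟩ | hx)
    · have : f ∈ d n := hn ▸ hf
      exact this.2
    · exact mon (Nat.le_add_right _ _) (hn₀ hx)
  have : cloneGen A ((unaryOp A '' S) ∪ N) ⊆ c (n₀ + n) :=
    Set.sInter_subset_of_mem ⟨hclone (n₀ + n), hsubset⟩
  exact le_antisymm (hcF _) (hgen ▸ this)
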